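/- Let 𝒜 be a countable subset of SL(2,ℝ) whose generated semigroup 𝒜* is not discrete in SL(2,ℝ) (i.e. 𝒜* has an accumulation point in SL(2,ℝ)). Then for every s > 0 the series ζ_𝒜(s) = ∑_{n≥1} ∑_{A ∈ 𝒜^n} ‖A‖^{-2s} diverges; in particular the critical exponent δ_𝒜 = inf{s > 0 : ζ_𝒜(s) < ∞} is infinite. -/

import Mathlib

open Matrix Topology

abbrev SL2 := Matrix.SpecialLinearGroup (Fin 2) ℝ

/-- The operator norm of a 2x2 real matrix, acting on Euclidean `ℝ²`. -/
noncomputable def matNorm (A : Matrix (Fin 2) (Fin 2) ℝ) : ℝ :=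
  ‖LinearMap.toContinuousLinearMap (Matrix.toEuclideanLin A)‖

instance : TopologicalSpace SL2 :=
  TopologicalSpace.induced (fun A => (A : Matrix (Fin 2) (Fin 2) ℝ)) inferInstance

/-- Product of the word `l` under the letter assignment `A`. -/
def wordProd {ι : Type*} (A : ι → SL2) (l : List ι) : SL2 := (l.map A).prod

/-- The zeta function `ζ_𝒜(s) = ∑_{n≥1} ∑_{A ∈ 𝒜ⁿ} ‖A‖^{-2s}`, the sum ranging over all
nonempty words over the alphabet `ι` (valued in `ℝ≥0∞` so divergence is value `⊤`). -/
noncomputable def zeta {ι : Type*} (A : ι → SL2) (s : ℝ) : ENNReal :=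
  ∑' l : {l : List ι // l ≠ []}, ENNReal.ofReal (matNorm (wordProd A l.1) ^ (-2 * s))

/-- The critical exponent `δ_𝒜 = inf {s > 0 : ζ_𝒜(s) < ∞}` (equal to `⊤` if the zeta
function always diverges). -/
noncomputable def deltaOf {ι : Type*} (A : ι → SL2) : ENNReal :=
  ⨅ s : {s : ℝ // 0 < s ∧ zeta A s < ⊤}, ENNReal.ofReal s.1

/- Auxiliary lemmas -/

lemma matNorm_continuous : Continuous matNorm := by
  have h : Continuous fun A : Matrix (Fin 2) (Fin 2) ℝ =>
      LinearMap.toContinuousLinearMap (Matrix.toEuclideanLin A) := by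
    exact ((LinearMap.toContinuousLinearMap.toLinearMap.comp
      (Matrix.toEuclideanLin
        (𝕜 := ℝ) (m := Fin 2) (n := Fin 2)).toLinearMap)).continuous_of_finiteDimensional
  exact continuous_norm.comp h

lemma matNorm_pos (y : SL2) : 0 < matNorm (y : Matrix (Fin 2) (Fin 2) ℝ) := by
  rw [matNorm, norm_pos_iff]
  intro h0
  rw [LinearEquiv.map_eq_zero_iff, LinearEquiv.map_eq_zero_iff] at h0
  have := y.2
  rw [h0] at this
  simp at this

lemma matNorm_nonneg (M : Matrix (Fin 2) (Fin 2) ℝ) : 0 ≤ matNorm M := norm_nonneg _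

lemma sl2_embedding : Topology.IsEmbedding (fun y : SL2 => (y : Matrix (Fin 2) (Fin 2) ℝ)) :=
  ⟨⟨rfl⟩, fun _ _ hab => Subtype.ext hab⟩

instance : T2Space SL2 := sl2_embedding.t2Space

lemma wordProd_append {ι : Type*} (A : ι → SL2) (l₁ l₂ : List ι) :
    wordProd A (l₁ ++ l₂) = wordProd A l₁ * wordProd A l₂ := by
  simp [wordProd]

lemma exists_word {ι : Type*} (A : ι → SL2) {y : SL2}
    (hy : y ∈ Subsemigroup.closure (Set.range A)) :
    ∃ l : List ι, l ≠ [] ∧ wordProd A l = y := by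
  induction hy using Subsemigroup.closure_induction with
  | mem z hz =>
      obtain ⟨i, rfl⟩ := hz
      exact ⟨[i], by simp, by simp [wordProd]⟩
  | mul a b _ _ ha hb =>
      obtain ⟨l₁, h₁, rfl⟩ := ha
      obtain ⟨l₂, h₂, rfl⟩ := hb
      exact ⟨l₁ ++ l₂, by simp [h₁], (wordProd_append A l₁ l₂)⟩

/-- If the semigroup generated by a countable `𝒜 ⊆ SL(2,ℝ)` is not discrete (it has an
accumulation point in `SL(2,ℝ)`), then for every `s > 0` the zeta series
`∑_{n≥1} ∑_{A ∈ 𝒜ⁿ} ‖A‖^{-2s}` diverges (so the critical exponent `δ_𝒜` is infinite). -/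
theorem stmt1 {ι : Type*} [Countable ι] (A : ι → SL2)
    (h : ∃ x : SL2, AccPt x (Filter.principal
      (Subsemigroup.closure (Set.range A) : Set SL2))) :
    (∀ s : ℝ, 0 < s →
      ¬ Summable (fun l : {l : List ι // l ≠ []} =>
        matNorm ((wordProd A l.1 : SL2) : Matrix (Fin 2) (Fin 2) ℝ) ^ (-2 * s))) ∧
    deltaOf A = ⊤ := by
  obtain ⟨x, hx⟩ := h
  have key : ∀ s : ℝ, 0 < s →
      ¬ Summable (fun l : {l : List ι // l ≠ []} =>
        matNorm ((wordProd A l.1 : SL2) : Matrix (Fin 2) (Fin 2) ℝ) ^ (-2 * s)) := by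
    intro s hs hsum
    set g : {l : List ι // l ≠ []} → ℝ :=
      fun l => matNorm ((wordProd A l.1 : SL2) : Matrix (Fin 2) (Fin 2) ℝ) ^ (-2 * s) with hg
    set C : ℝ := matNorm (x : Matrix (Fin 2) (Fin 2) ℝ) + 1 with hC
    have hCpos : 0 < C := by have := matNorm_nonneg ((x : SL2) : Matrix (Fin 2) (Fin 2) ℝ); linarith
    set ε : ℝ := C ^ (-2 * s) with hε
    have hεpos : 0 < ε := Real.rpow_pos_of_pos hCpos _
    -- the set of words with small norm is finite
    have hfin : {l : {l : List ι // l ≠ []} | ε ≤ g l}.Finite := by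
      have h1 : ∀ᶠ l in Filter.cofinite, g l < ε :=
        hsum.tendsto_cofinite_zero (Iio_mem_nhds hεpos)
      have := h1.filter_mono (le_refl _)
      rw [Filter.eventually_cofinite] at h1
      convert h1 using 1
      ext l; simp [not_lt]
    have hL : {l : {l : List ι // l ≠ []} |
        matNorm ((wordProd A l.1 : SL2) : Matrix (Fin 2) (Fin 2) ℝ) ≤ C}.Finite := by
      refine hfin.subset fun l hl => ?_
      exact Real.rpow_le_rpow_of_nonpos (matNorm_pos _) hl
        (by nlinarith)
    -- finite set of possible semigroup elements with small norm
    set F : Set SL2 := (fun l : {l : List ι // l ≠ []} => wordProd A l.1) '' {l |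
        matNorm ((wordProd A l.1 : SL2) : Matrix (Fin 2) (Fin 2) ℝ) ≤ C} with hF
    have hFfin : F.Finite := hL.image _
    -- a neighborhood of x avoiding F \ {x} and with norm < C
    have hU : ({y : SL2 | matNorm (y : Matrix (Fin 2) (Fin 2) ℝ) < C} \ (F \ {x})) ∈ 𝓝 x := by
      apply Filter.inter_mem
      · refine IsOpen.mem_nhds ?_ (by simp [hC])
        exact isOpen_lt (matNorm_continuous.comp sl2_embedding.continuous) continuous_const
      · refine IsOpen.mem_nhds (hFfin.diff.isClosed.isOpen_compl) ?_
        simp only [Set.mem_compl_iff, Set.mem_diff, Set.mem_singleton_iff]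
        exact fun h => h.2 rfl
    obtain ⟨y, ⟨hyU, hyS⟩, hyx⟩ := accPt_iff_nhds.mp hx _ hU
    obtain ⟨l, hl, hly⟩ := exists_word A hyS
    have hynorm : matNorm (y : Matrix (Fin 2) (Fin 2) ℝ) ≤ C := le_of_lt hyU.1
    have hyF : y ∈ F := ⟨⟨l, hl⟩, by simp only [Set.mem_setOf_eq, hly]; exact hynorm, hly⟩
    exact hyU.2 ⟨hyF, hyx⟩
  refine ⟨key, ?_⟩
  have : IsEmpty {s : ℝ // 0 < s ∧ zeta A s < ⊤} := by
    refine ⟨fun ⟨s, hs, hfin⟩ => ?_⟩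
    have hsum := ENNReal.summable_toReal hfin.ne
    have : Summable (fun l : {l : List ι // l ≠ []} =>
        matNorm ((wordProd A l.1 : SL2) : Matrix (Fin 2) (Fin 2) ℝ) ^ (-2 * s)) := by
      refine hsum.congr fun l => ?_
      exact ENNReal.toReal_ofReal (Real.rpow_nonneg (matNorm_nonneg _) _)
    exact key s hs this
  rw [deltaOf, iInf_of_empty]
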